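/- Under Assumptions (A1) and (A3), define for δ > 0 and t ≥ 0: 𝓡₂^δ(t) := Σ_{i=0}^{⌊t/δ⌋−1} ∫_{iδ}^{(i+1)δ} ( κ'(x(iδ)) − κ'(x(s)) )·f(x(iδ))·E(s,t) ds and 𝓡₃^δ(t) := Σ_{i=0}^{⌊t/δ⌋−1} ∫_{iδ}^{(i+1)δ} κ'(x(s))·( f(x(iδ)) − f(x(s)) )·E(s,t) ds. Then for every integer p ≥ 1 there exists a constant C > 0, independent of t and δ, such that |𝓡₂^δ(t)|^p + |𝓡₃^δ(t)|^p ≤ C·δ^p for all δ ∈ (0,1) and all t ≥ 0. -/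

import Mathlib

open Set Filter MeasureTheory intervalIntegral
open scoped Topology

lemma abs_deriv_le_of_right_slope_le {f : ℝ → ℝ} {y c : ℝ}
    (hf : DifferentiableAt ℝ f y)
    (h : ∀ z, y < z → z < y + 1 → |f z - f y| ≤ c * (z - y)) :
    |deriv f y| ≤ c := by
  have hd : Tendsto (slope f y) (𝓝[≠] y) (𝓝 (deriv f y)) :=
    hasDerivAt_iff_tendsto_slope.1 hf.hasDerivAt
  have hd' : Tendsto (fun z => |slope f y z|) (𝓝[>] y) (𝓝 (|deriv f y|)) :=
    ((continuous_abs.tendsto _).comp hd).mono_left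
      (nhdsWithin_mono y (fun z hz => ne_of_gt hz))
  refine le_of_tendsto hd' ?_
  filter_upwards [Ioo_mem_nhdsGT_of_mem (by exact ⟨le_refl y, lt_add_one y⟩)] with z hz
  have hzy : 0 < z - y := by linarith [hz.1]
  have : |slope f y z| = |f z - f y| / (z - y) := by
    rw [slope_def_field, abs_div, abs_of_pos hzy]
  rw [this, div_le_iff₀ hzy]
  exact h z hz.1 hz.2


lemma xreg (f κ : ℝ → ℝ) (x₀ : ℝ) (x : ℝ → ℝ) (R M : ℝ)
    (hfc : Continuous f) (hκc : Continuous κ) (hR0 : 0 ≤ R)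
    (hbd : ∀ y : ℝ, |y| ≤ R → |f y + κ y| ≤ M)
    (hdiss : ∀ y : ℝ, R < |y| → y * (f y + κ y) < 0)
    (hx0 : |x₀| ≤ R)
    (hx : ∀ t : ℝ, 0 ≤ t → x t = x₀ + ∫ s in (0:ℝ)..t, (f (x s) + κ (x s))) :
    ∀ T : ℝ, 0 ≤ T →
      IntervalIntegrable (fun s => f (x s) + κ (x s)) volume 0 T ∧
      ContinuousOn x (Icc 0 T) ∧ ∀ s ∈ Icc (0:ℝ) T, |x s| ≤ R := by
  set g : ℝ → ℝ := fun s => f (x s) + κ (x s) with hgdef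
  have key : ∀ T, 0 ≤ T → IntervalIntegrable g volume 0 T →
      ContinuousOn x (Icc 0 T) ∧ ∀ s ∈ Icc (0:ℝ) T, |x s| ≤ R := by
    intro T hT hTi
    have hprim : ContinuousOn (fun b => ∫ s in (0:ℝ)..b, g s) (Icc 0 T) := by
      have := intervalIntegral.continuousOn_primitive_interval' hTi
        (by rw [uIcc_of_le hT]; exact ⟨le_refl 0, hT⟩)
      rwa [uIcc_of_le hT] at this
    have hxc : ContinuousOn x (Icc 0 T) := by
      refine ContinuousOn.congr ((continuousOn_const (c := x₀)).add hprim) ?_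
      intro s hs
      exact hx s hs.1
    refine ⟨hxc, ?_⟩
    by_contra hcon
    push_neg at hcon
    obtain ⟨t₁, ht₁, ht₁R⟩ := hcon
    have hgc : ContinuousOn g (Icc 0 T) :=
      (hfc.comp_continuousOn hxc).add (hκc.comp_continuousOn hxc)
    have hderiv : ∀ s ∈ Ioo (0:ℝ) T, HasDerivAt x (g s) s := by
      intro s hs
      have hmem : Icc (0:ℝ) T ∈ 𝓝 s := Icc_mem_nhds hs.1 hs.2
      have hca : ContinuousAt g s := hgc.continuousAt hmem
      have hmeas : StronglyMeasurableAtFilter g (𝓝 s) volume := by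
        refine ContinuousAt.stronglyMeasurableAtFilter isOpen_Ioo ?_ s hs
        intro z hz
        exact hgc.continuousAt (Icc_mem_nhds hz.1 hz.2)
      have hsub : uIcc (0:ℝ) s ⊆ uIcc (0:ℝ) T := by
        rw [uIcc_of_le hs.1.le, uIcc_of_le hT]
        exact Icc_subset_Icc le_rfl hs.2.le
      have hint' : IntervalIntegrable g volume 0 s := hTi.mono_set hsub
      have hFTC : HasDerivAt (fun u => ∫ τ in (0:ℝ)..u, g τ) (g s) s :=
        intervalIntegral.integral_hasDerivAt_right hint' hmeas hca
      have hFTC' : HasDerivAt (fun u => x₀ + ∫ τ in (0:ℝ)..u, g τ) (g s) s :=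
        hFTC.const_add x₀
      refine hFTC'.congr_of_eventuallyEq ?_
      filter_upwards [Ioi_mem_nhds hs.1] with u hu
      exact hx u hu.le
    set W : ℝ → ℝ := fun s => x s ^ 2 with hWdef
    have hWc : ContinuousOn W (Icc 0 T) := hxc.pow 2
    set A : Set ℝ := Icc 0 t₁ ∩ W ⁻¹' (Iic (R ^ 2)) with hAdef
    have hx00 : x 0 = x₀ := by
      rw [hx 0 le_rfl, intervalIntegral.integral_same, add_zero]
    have hA0 : (0:ℝ) ∈ A := by
      constructor
      · exact ⟨le_rfl, ht₁.1⟩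
      · show W 0 ≤ R ^ 2
        have : W 0 = |x₀| ^ 2 := by rw [hWdef]; simp [hx00, sq_abs]
        rw [this]
        exact pow_le_pow_left₀ (abs_nonneg _) hx0 2
    have hAbdd : BddAbove A := ⟨t₁, fun s hs => hs.1.2⟩
    have hAcl : IsClosed A :=
      (hWc.mono (Icc_subset_Icc le_rfl ht₁.2)).preimage_isClosed_of_isClosed
        isClosed_Icc isClosed_Iic
    set t₀ := sSup A with ht₀def
    have ht₀A : t₀ ∈ A := hAcl.csSup_mem ⟨0, hA0⟩ hAbdd
    have ht₀t₁ : t₀ ≤ t₁ := csSup_le ⟨0, hA0⟩ fun s hs => hs.1.2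
    have hWt₁ : R ^ 2 < W t₁ := by
      have : R ^ 2 < |x t₁| ^ 2 := by
        refine pow_lt_pow_left₀ ht₁R hR0 ?_
        norm_num
      rwa [sq_abs] at this
    have ht₀lt : t₀ < t₁ := by
      refine lt_of_le_of_ne ht₀t₁ ?_
      intro h
      rw [h] at ht₀A
      exact absurd ht₀A.2 (not_le.2 hWt₁)
    have hgt : ∀ s ∈ Ioc t₀ t₁, R ^ 2 < W s := by
      intro s hs
      by_contra hle
      push_neg at hle
      have hsA : s ∈ A := ⟨⟨le_trans ht₀A.1.1 hs.1.le, hs.2⟩, hle⟩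
      exact absurd (le_csSup hAbdd hsA) (not_le.2 hs.1)
    have hanti : AntitoneOn W (Icc t₀ t₁) := by
      have hIoosub : Ioo t₀ t₁ ⊆ Ioo 0 T := fun s hs =>
        ⟨lt_of_le_of_lt ht₀A.1.1 hs.1, lt_of_lt_of_le hs.2 ht₁.2⟩
      have hWd : ∀ s ∈ Ioo t₀ t₁, HasDerivAt W (2 * x s * g s) s := by
        intro s hs
        have := (hderiv s (hIoosub hs)).pow 2
        have hW' : W = x ^ 2 := by funext u; simp [hWdef]
        rw [hW']
        simpa [mul_comm, mul_assoc, mul_left_comm] using this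
      refine antitoneOn_of_deriv_nonpos (convex_Icc _ _)
        (hWc.mono (Icc_subset_Icc ht₀A.1.1 ht₁.2)) ?_ ?_
      · intro s hs
        rw [interior_Icc] at hs
        exact ((hWd s hs).differentiableAt).differentiableWithinAt
      · intro s hs
        rw [interior_Icc] at hs
        rw [(hWd s hs).deriv]
        have hRlt : R < |x s| := by
          have h2 : R ^ 2 < |x s| ^ 2 := by
            rw [sq_abs]; exact hgt s ⟨hs.1, hs.2.le⟩
          exact lt_of_pow_lt_pow_left₀ 2 (abs_nonneg _) h2
        have hd1 := hdiss (x s) hRlt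
        have h2 : 2 * x s * g s = 2 * (x s * (f (x s) + κ (x s))) := by
          rw [hgdef]; ring
        rw [h2]
        linarith
    have hcontra : W t₁ ≤ W t₀ :=
      hanti ⟨le_rfl, ht₀lt.le⟩ ⟨ht₀lt.le, le_rfl⟩ ht₀lt.le
    have : W t₀ ≤ R ^ 2 := ht₀A.2
    linarith [hWt₁]
  have hIg : ∀ T, 0 ≤ T → IntervalIntegrable g volume 0 T := by
    by_contra hcon
    push_neg at hcon
    obtain ⟨T₀, hT₀, hT₀n⟩ := hcon
    set S : Set ℝ := {T | 0 ≤ T ∧ IntervalIntegrable g volume 0 T} with hSdef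
    have h0S : (0:ℝ) ∈ S := ⟨le_rfl, by rw [intervalIntegrable_iff]; simp⟩
    have hdown : ∀ T ∈ S, ∀ T', 0 ≤ T' → T' ≤ T → T' ∈ S := by
      intro T hTS T' h1 h2
      refine ⟨h1, hTS.2.mono_set ?_⟩
      rw [uIcc_of_le h1, uIcc_of_le (le_trans h1 h2)]
      exact Icc_subset_Icc le_rfl h2
    have hext : ∀ T ∈ S, ∃ t, T < t ∧ t ∈ S := by
      intro T hTS
      by_contra hno
      push_neg at hno
      have hnone : ∀ t, T < t → ¬IntervalIntegrable g volume 0 t := fun t ht hi =>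
        hno t ht ⟨le_trans hTS.1 ht.le, hi⟩
      have hconst : ∀ t, T < t → x t = x₀ := by
        intro t ht
        rw [hx t (le_trans hTS.1 ht.le), intervalIntegral.integral_undef (hnone t ht), add_zero]
      have hTT1 : IntervalIntegrable g volume T (T + 1) := by
        rw [intervalIntegrable_iff_integrableOn_Ioc_of_le (by linarith)]
        have hconstI : IntegrableOn (fun _ : ℝ => f x₀ + κ x₀) (Ioc T (T + 1)) volume :=
          integrableOn_const measure_Ioc_lt_top.ne
        refine hconstI.congr_fun ?_ measurableSet_Ioc
        intro z hz
        have hz0 : x z = x₀ := hconst z hz.1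
        show f x₀ + κ x₀ = f (x z) + κ (x z)
        rw [hz0]
      exact hnone (T + 1) (by linarith) (hTS.2.trans hTT1)
    have hub : ∀ s ∈ S, s ≤ T₀ := by
      intro s hs
      by_contra hgt
      push_neg at hgt
      exact hT₀n (hdown s hs T₀ hT₀ hgt.le).2
    have hSne : S.Nonempty := ⟨0, h0S⟩
    have hSbdd : BddAbove S := ⟨T₀, hub⟩
    set Ts := sSup S with hTsdef
    have hTs0 : 0 ≤ Ts := le_csSup hSbdd h0S
    have hTsS : Ts ∈ S := by
      refine ⟨hTs0, ?_⟩
      rcases eq_or_lt_of_le hTs0 with h | h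
      · exact h ▸ h0S.2
      have hIco : ∀ T', 0 ≤ T' → T' < Ts → T' ∈ S := by
        intro T' h1 h2
        obtain ⟨s, hsS, hs⟩ := exists_lt_of_lt_csSup hSne h2
        exact hdown s hsS T' h1 hs.le
      have hgco : ContinuousOn g (Ico 0 Ts) := by
        intro s hs
        have h1 : s < (s + Ts) / 2 := by linarith [hs.2]
        have h2 : (s + Ts) / 2 < Ts := by linarith [hs.2]
        have hT'S : (s + Ts) / 2 ∈ S := hIco _ (by linarith [hs.1]) h2
        have hxcT' := (key _ hT'S.1 hT'S.2).1
        have hgcT' : ContinuousOn g (Icc 0 ((s + Ts) / 2)) :=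
          (hfc.comp_continuousOn hxcT').add (hκc.comp_continuousOn hxcT')
        have hcw : ContinuousWithinAt g (Icc 0 ((s + Ts) / 2)) s := hgcT' s ⟨hs.1, h1.le⟩
        refine hcw.mono_of_mem_nhdsWithin ?_
        refine mem_of_superset
          (inter_mem self_mem_nhdsWithin (mem_nhdsWithin_of_mem_nhds (Iic_mem_nhds h1))) ?_
        rintro z ⟨hz1, hz2⟩
        exact ⟨hz1.1, hz2⟩
      have hbound : ∀ s ∈ Ioo (0:ℝ) Ts, ‖g s‖ ≤ M := by
        intro s hs
        have hsS : s ∈ S := hIco s hs.1.le hs.2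
        have hsR := (key s hsS.1 hsS.2).2 s ⟨hs.1.le, le_rfl⟩
        rw [Real.norm_eq_abs]
        exact hbd _ hsR
      have hmble : AEStronglyMeasurable g (volume.restrict (Ioo 0 Ts)) :=
        (hgco.mono Ioo_subset_Ico_self).aestronglyMeasurable measurableSet_Ioo
      have hii : IntegrableOn g (Ioo 0 Ts) volume :=
        ⟨hmble, HasFiniteIntegral.restrict_of_bounded (C := M) measure_Ioo_lt_top
          ((ae_restrict_iff' measurableSet_Ioo).2 (ae_of_all _ hbound))⟩
      rw [intervalIntegrable_iff_integrableOn_Ioc_of_le hTs0]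
      exact hii.congr_set_ae Ioo_ae_eq_Ioc.symm
    obtain ⟨t, htgt, htS⟩ := hext Ts hTsS
    exact absurd (le_csSup hSbdd htS) (not_le.2 htgt)
  intro T hT
  exact ⟨hIg T hT, (key T hT (hIg T hT)).1, (key T hT (hIg T hT)).2⟩

set_option maxHeartbeats 1000000 in
theorem stmt7_aux
    (f κ : ℝ → ℝ) (x₀ : ℝ) (x : ℝ → ℝ)
    (lam ξ μ Lκ γ : ℝ) (q : ℕ)
    (hlam : 0 < lam) (hξ : 0 < ξ) (hμ : 0 < μ) (hLκ : 0 < Lκ) (hγ : 0 < γ)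
    (hcontr : ∀ a b : ℝ, (a - b) * (f a - f b) ≤ -lam * (a - b) ^ 2)
    (hfLip : ∀ a b : ℝ, |f a - f b| ≤ (ξ * (|a| ^ q + |b| ^ q) + μ) * |a - b|)
    (hκLip : ∀ a b : ℝ, |κ a - κ b| ≤ Lκ * |a - b|)
    (hgap : lam / 2 - Lκ > 0)
    (hκbd : ∀ a : ℝ, |κ a| ≤ γ)
    (hfd : Differentiable ℝ f) (hfd2 : Differentiable ℝ (deriv f))
    (hκd : Differentiable ℝ κ) (hκd2 : Differentiable ℝ (deriv κ))
    (K : ℝ) (hK : ∀ y : ℝ, |deriv (deriv κ) y| ≤ K)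
    (cf : ℝ) (rf : ℕ) (hf2 : ∀ y : ℝ, |deriv (deriv f) y| ≤ cf * (1 + |y| ^ rf))
    (Cstar : ℝ) (hCstar : 0 < Cstar)
    (hint : ∀ m : ℕ, (m = 1 ∨ m = 2) → ∀ t : ℝ, 0 ≤ t →
      (∫ s in (0:ℝ)..t,
        Real.exp ((m : ℝ) * ∫ u in s..t, (deriv f (x u) + deriv κ (x u)))) ≤ Cstar)
    (hx : ∀ t : ℝ, 0 ≤ t → x t = x₀ + ∫ s in (0:ℝ)..t, (f (x s) + κ (x s)))
    :
    ∀ p : ℕ, 1 ≤ p → ∃ C : ℝ, 0 < C ∧ ∀ δ : ℝ, 0 < δ → δ < 1 → ∀ t : ℝ, 0 ≤ t →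
      |∑ i ∈ Finset.range (⌊t / δ⌋).toNat,
          ∫ s in ((i : ℝ) * δ)..(((i : ℝ) + 1) * δ),
            (deriv κ (x ((i : ℝ) * δ)) - deriv κ (x s)) * f (x ((i : ℝ) * δ)) *
              Real.exp (∫ u in s..t, (deriv f (x u) + deriv κ (x u)))| ^ p
        +
      |∑ i ∈ Finset.range (⌊t / δ⌋).toNat,
          ∫ s in ((i : ℝ) * δ)..(((i : ℝ) + 1) * δ),
            deriv κ (x s) * (f (x ((i : ℝ) * δ)) - f (x s)) *
              Real.exp (∫ u in s..t, (deriv f (x u) + deriv κ (x u)))| ^ p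
        ≤ C * δ ^ p := by
  -- derivative bounds
  have hκ'bd : ∀ y : ℝ, |deriv κ y| ≤ Lκ := by
    intro y
    refine abs_deriv_le_of_right_slope_le (hκd y) ?_
    intro z h1 h2
    have h3 := hκLip z y
    rwa [abs_of_pos (sub_pos.2 h1)] at h3
  have hκ'lip : ∀ a b : ℝ, |deriv κ a - deriv κ b| ≤ K * |a - b| := by
    intro a b
    have h := Convex.norm_image_sub_le_of_norm_deriv_le (𝕜 := ℝ) (f := deriv κ) (s := univ)
      (fun z _ => hκd2 z) (fun z _ => by rw [Real.norm_eq_abs]; exact hK z)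
      convex_univ (mem_univ b) (mem_univ a)
    simpa [Real.norm_eq_abs] using h
  have hK0 : 0 ≤ K := le_trans (abs_nonneg _) (hK 0)
  -- constants
  set R : ℝ := max |x₀| ((|f 0| + γ) / lam) with hRdef
  have hR0 : 0 ≤ R := le_trans (abs_nonneg _) (le_max_left _ _)
  have hRq0 : 0 ≤ R ^ q := pow_nonneg hR0 q
  have hRlam : |f 0| + γ ≤ lam * R := by
    have h := le_max_right |x₀| ((|f 0| + γ) / lam)
    rw [div_le_iff₀ hlam] at h
    linarith [h]
  set Bf : ℝ := (ξ * (R ^ q + 1) + μ) * R + |f 0| with hBfdef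
  have hBfc0 : 0 ≤ ξ * (R ^ q + 1) + μ := by
    have : 0 ≤ ξ * (R ^ q + 1) := mul_nonneg hξ.le (by linarith)
    linarith [hμ.le]
  have hBf0 : 0 ≤ Bf := by
    have : 0 ≤ (ξ * (R ^ q + 1) + μ) * R := mul_nonneg hBfc0 hR0
    have h2 := abs_nonneg (f 0)
    rw [hBfdef]; linarith
  have hfy : ∀ y : ℝ, |y| ≤ R → |f y| ≤ Bf := by
    intro y hy
    have h1 := hfLip y 0
    have h2 : |f y| ≤ |f y - f 0| + |f 0| := by
      calc |f y| = |f y - f 0 + f 0| := by rw [sub_add_cancel]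
        _ ≤ |f y - f 0| + |f 0| := abs_add_le _ _
    have hyq : |y| ^ q ≤ R ^ q := pow_le_pow_left₀ (abs_nonneg _) hy q
    have h0q : |(0:ℝ)| ^ q ≤ 1 := by rw [abs_zero]; exact zero_pow_le_one q
    have h3 : (ξ * (|y| ^ q + |(0:ℝ)| ^ q) + μ) * |y - 0| ≤ (ξ * (R ^ q + 1) + μ) * R := by
      rw [sub_zero]
      calc (ξ * (|y| ^ q + |(0:ℝ)| ^ q) + μ) * |y|
          ≤ (ξ * (R ^ q + 1) + μ) * |y| := by
            refine mul_le_mul_of_nonneg_right ?_ (abs_nonneg y)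
            have := mul_le_mul_of_nonneg_left (add_le_add hyq h0q) hξ.le
            linarith
        _ ≤ (ξ * (R ^ q + 1) + μ) * R := mul_le_mul_of_nonneg_left hy hBfc0
    rw [hBfdef]; linarith
  set M : ℝ := Bf + γ with hMdef
  have hM0 : 0 ≤ M := by rw [hMdef]; linarith [hγ.le, hBf0]
  have hgbd : ∀ y : ℝ, |y| ≤ R → |f y + κ y| ≤ M := by
    intro y hy
    calc |f y + κ y| ≤ |f y| + |κ y| := abs_add_le _ _
      _ ≤ Bf + γ := add_le_add (hfy y hy) (hκbd y)
  have hdiss : ∀ y : ℝ, R < |y| → y * (f y + κ y) < 0 := by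
    intro y hy
    have h1 : y * (f y - f 0) ≤ -lam * y ^ 2 := by
      have := hcontr y 0
      simpa using this
    have h2 : y * f 0 ≤ |y| * |f 0| := le_trans (le_abs_self _) (le_of_eq (abs_mul _ _))
    have h3 : y * κ y ≤ |y| * γ :=
      le_trans (le_abs_self _)
        (by rw [abs_mul]; exact mul_le_mul_of_nonneg_left (hκbd y) (abs_nonneg y))
    have hy0 : 0 < |y| := lt_of_le_of_lt hR0 hy
    have hsq : y ^ 2 = |y| ^ 2 := (sq_abs y).symm
    have h4 : |y| * (|f 0| + γ) ≤ |y| * (lam * R) := mul_le_mul_of_nonneg_left hRlam (abs_nonneg y)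
    have h5 : lam * R * |y| < lam * |y| * |y| := by
      have := mul_lt_mul_of_pos_left hy (mul_pos hlam hy0)
      nlinarith [this]
    nlinarith [h1, h2, h3, h4, h5, hsq]
  -- regularity
  have hreg := xreg f κ x₀ x R M hfd.continuous hκd.continuous hR0 hgbd hdiss
    (le_max_left _ _) hx
  have hxbd : ∀ s : ℝ, 0 ≤ s → |x s| ≤ R := fun s hs => (hreg s hs).2.2 s ⟨hs, le_rfl⟩
  have hgI : ∀ T : ℝ, 0 ≤ T →
      IntervalIntegrable (fun s => f (x s) + κ (x s)) volume 0 T := fun T hT => (hreg T hT).1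
  have hxcont : ∀ T : ℝ, 0 ≤ T → ContinuousOn x (Icc 0 T) := fun T hT => (hreg T hT).2.1
  have hxlip : ∀ s t : ℝ, 0 ≤ s → s ≤ t → |x t - x s| ≤ M * (t - s) := by
    intro s t hs hst
    have h0t : 0 ≤ t := le_trans hs hst
    have hIst : IntervalIntegrable (fun u => f (x u) + κ (x u)) volume s t :=
      (hgI t h0t).mono_set
        (by rw [uIcc_of_le hst, uIcc_of_le h0t]; exact Icc_subset_Icc hs le_rfl)
    have hI0s : IntervalIntegrable (fun u => f (x u) + κ (x u)) volume 0 s := hgI s hs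
    have hadd := intervalIntegral.integral_add_adjacent_intervals hI0s hIst
    have hdiff : x t - x s = ∫ u in s..t, (f (x u) + κ (x u)) := by
      rw [hx t h0t, hx s hs]
      linarith [hadd]
    rw [hdiff]
    have hnorm := intervalIntegral.norm_integral_le_of_norm_le_const (C := M)
      (f := fun u => f (x u) + κ (x u)) (a := s) (b := t) ?_
    · rw [Real.norm_eq_abs, abs_of_nonneg (by linarith : (0:ℝ) ≤ t - s)] at hnorm
      simpa [Real.norm_eq_abs] using hnorm
    · intro u hu
      rw [uIoc_of_le hst] at hu
      rw [Real.norm_eq_abs]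
      exact hgbd _ (hxbd u (le_trans hs hu.1.le))
  -- main estimate
  intro p hp
  set c2 : ℝ := K * M * Bf with hc2def
  set c3 : ℝ := Lκ * ((ξ * (R ^ q + R ^ q) + μ) * M) with hc3def
  have hc20 : 0 ≤ c2 := mul_nonneg (mul_nonneg hK0 hM0) hBf0
  have hc30 : 0 ≤ c3 := by
    refine mul_nonneg hLκ.le (mul_nonneg ?_ hM0)
    have : 0 ≤ ξ * (R ^ q + R ^ q) := mul_nonneg hξ.le (by linarith)
    linarith [hμ.le]
  set D : ℝ := max (c2 * Cstar) (c3 * Cstar) + 1 with hDdef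
  have hD1 : 1 ≤ D := by
    have h1 : 0 ≤ c2 * Cstar := mul_nonneg hc20 hCstar.le
    have : 0 ≤ max (c2 * Cstar) (c3 * Cstar) := le_trans h1 (le_max_left _ _)
    rw [hDdef]; linarith
  have hD0 : 0 < D := lt_of_lt_of_le one_pos hD1
  refine ⟨2 * D ^ p, by positivity, ?_⟩
  intro δ hδ0 hδ1 t ht
  set N := (⌊t / δ⌋).toNat with hNdef
  have hNδ : (N : ℝ) * δ ≤ t := by
    have h1 : ((⌊t / δ⌋ : ℤ) : ℝ) ≤ t / δ := Int.floor_le _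
    have h2 : (0 : ℤ) ≤ ⌊t / δ⌋ := Int.floor_nonneg.2 (div_nonneg ht hδ0.le)
    have h3 : (N : ℝ) = ((⌊t / δ⌋ : ℤ) : ℝ) := by
      rw [hNdef]
      exact_mod_cast congrArg (fun z : ℤ => (z : ℝ)) (Int.toNat_of_nonneg h2)
    rw [h3]
    calc ((⌊t / δ⌋ : ℤ) : ℝ) * δ ≤ (t / δ) * δ := mul_le_mul_of_nonneg_right h1 hδ0.le
      _ = t := div_mul_cancel₀ t hδ0.ne'
  -- continuity of the exponential factor
  have hφc : ContinuousOn (fun u => deriv f (x u) + deriv κ (x u)) (Icc 0 t) :=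
    (hfd2.continuous.comp_continuousOn (hxcont t ht)).add
      (hκd2.continuous.comp_continuousOn (hxcont t ht))
  have hφI : IntervalIntegrable (fun u => deriv f (x u) + deriv κ (x u)) volume 0 t := by
    have : ContinuousOn (fun u => deriv f (x u) + deriv κ (x u)) (uIcc 0 t) := by
      rwa [uIcc_of_le ht]
    exact this.intervalIntegrable
  have hprim : ContinuousOn
      (fun s => ∫ u in (0:ℝ)..s, (deriv f (x u) + deriv κ (x u))) (Icc 0 t) := by
    have := intervalIntegral.continuousOn_primitive_interval' hφI
      (by rw [uIcc_of_le ht]; exact ⟨le_rfl, ht⟩)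
    rwa [uIcc_of_le ht] at this
  have hEc : ContinuousOn
      (fun s => Real.exp (∫ u in s..t, (deriv f (x u) + deriv κ (x u)))) (Icc 0 t) := by
    have hcont : ContinuousOn (fun s => Real.exp
        ((∫ u in (0:ℝ)..t, (deriv f (x u) + deriv κ (x u))) -
          ∫ u in (0:ℝ)..s, (deriv f (x u) + deriv κ (x u)))) (Icc 0 t) :=
      Real.continuous_exp.comp_continuousOn
        ((continuousOn_const (c := ∫ u in (0:ℝ)..t, (deriv f (x u) + deriv κ (x u)))).sub hprim)
    refine ContinuousOn.congr hcont ?_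
    intro s hs
    have hI0s : IntervalIntegrable (fun u => deriv f (x u) + deriv κ (x u)) volume 0 s :=
      hφI.mono_set (by rw [uIcc_of_le hs.1, uIcc_of_le ht]; exact Icc_subset_Icc le_rfl hs.2)
    have hIst : IntervalIntegrable (fun u => deriv f (x u) + deriv κ (x u)) volume s t :=
      hφI.mono_set (by rw [uIcc_of_le hs.2, uIcc_of_le ht]; exact Icc_subset_Icc hs.1 le_rfl)
    have hadd := intervalIntegral.integral_add_adjacent_intervals hI0s hIst
    show Real.exp _ = Real.exp _
    congr 1
    linarith [hadd]
  have hEint : ∀ a b : ℝ, 0 ≤ a → a ≤ b → b ≤ t →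
      IntervalIntegrable (fun s => Real.exp (∫ u in s..t, (deriv f (x u) + deriv κ (x u))))
        volume a b := by
    intro a b h1 h2 h3
    exact (hEc.mono (by rw [uIcc_of_le h2]; exact Icc_subset_Icc h1 h3)).intervalIntegrable
  -- generic facts about subintervals
  have hia0 : ∀ i : ℕ, 0 ≤ (i : ℝ) * δ := fun i => mul_nonneg (Nat.cast_nonneg i) hδ0.le
  have hiab : ∀ i : ℕ, (i : ℝ) * δ ≤ ((i : ℝ) + 1) * δ := fun i =>
    mul_le_mul_of_nonneg_right (le_add_of_nonneg_right zero_le_one) hδ0.le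
  have hibt : ∀ i : ℕ, i < N → ((i : ℝ) + 1) * δ ≤ t := by
    intro i hi
    have h1 : (i : ℝ) + 1 ≤ (N : ℝ) := by exact_mod_cast Nat.succ_le_of_lt hi
    calc ((i : ℝ) + 1) * δ ≤ (N : ℝ) * δ := mul_le_mul_of_nonneg_right h1 hδ0.le
      _ ≤ t := hNδ
  -- sum of E-integrals
  have hEsum : (∑ i ∈ Finset.range N,
      ∫ s in ((i : ℝ) * δ)..(((i : ℝ) + 1) * δ),
        Real.exp (∫ u in s..t, (deriv f (x u) + deriv κ (x u)))) ≤ Cstar := by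
    have hadj := intervalIntegral.sum_integral_adjacent_intervals (μ := volume)
      (a := fun k : ℕ => (k : ℝ) * δ)
      (f := fun s => Real.exp (∫ u in s..t, (deriv f (x u) + deriv κ (x u)))) (n := N)
      (by
        intro k hk
        have heq : ((k + 1 : ℕ) : ℝ) * δ = ((k : ℝ) + 1) * δ := by push_cast; ring
        show IntervalIntegrable _ volume ((k : ℝ) * δ) (((k + 1 : ℕ) : ℝ) * δ)
        rw [heq]
        exact hEint _ _ (hia0 k) (hiab k) (hibt k hk))
    have hadj' : (∑ i ∈ Finset.range N,
        ∫ s in ((i : ℝ) * δ)..(((i : ℝ) + 1) * δ),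
          Real.exp (∫ u in s..t, (deriv f (x u) + deriv κ (x u))))
        = ∫ s in (0:ℝ)..((N : ℝ) * δ),
            Real.exp (∫ u in s..t, (deriv f (x u) + deriv κ (x u))) := by
      simpa using hadj
    have hIN : IntervalIntegrable
        (fun s => Real.exp (∫ u in s..t, (deriv f (x u) + deriv κ (x u)))) volume 0 ((N:ℝ)*δ) :=
      hEint 0 _ le_rfl (hia0 N) hNδ
    have hINt : IntervalIntegrable
        (fun s => Real.exp (∫ u in s..t, (deriv f (x u) + deriv κ (x u)))) volume ((N:ℝ)*δ) t :=
      hEint _ t (hia0 N) hNδ le_rfl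
    have hadd := intervalIntegral.integral_add_adjacent_intervals hIN hINt
    have hnn : 0 ≤ ∫ s in ((N:ℝ)*δ)..t,
        Real.exp (∫ u in s..t, (deriv f (x u) + deriv κ (x u))) :=
      intervalIntegral.integral_nonneg hNδ (fun u _ => (Real.exp_pos _).le)
    have hful : (∫ s in (0:ℝ)..t,
        Real.exp (∫ u in s..t, (deriv f (x u) + deriv κ (x u)))) ≤ Cstar := by
      have := hint 1 (Or.inl rfl) t ht
      simpa using this
    rw [hadj']
    linarith [hadd, hnn, hful]
  -- per-term bounds
  have hsubset : ∀ i : ℕ, i < N → uIcc ((i:ℝ)*δ) (((i:ℝ)+1)*δ) ⊆ Icc 0 t := by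
    intro i hi
    rw [uIcc_of_le (hiab i)]
    exact Icc_subset_Icc (hia0 i) (hibt i hi)
  have hxstep : ∀ i : ℕ, i < N → ∀ s ∈ Icc ((i:ℝ)*δ) (((i:ℝ)+1)*δ),
      |x s - x ((i:ℝ)*δ)| ≤ M * δ := by
    intro i hi s hs
    have h1 := hxlip ((i:ℝ)*δ) s (hia0 i) hs.1
    have h2 : s - (i:ℝ)*δ ≤ δ := by
      have hexp : ((i:ℝ)+1)*δ = (i:ℝ)*δ + δ := by ring
      have := hs.2
      rw [hexp] at this
      linarith
    calc |x s - x ((i:ℝ)*δ)| ≤ M * (s - (i:ℝ)*δ) := h1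
      _ ≤ M * δ := mul_le_mul_of_nonneg_left h2 hM0
  have hterm2 : ∀ i : ℕ, i < N →
      |∫ s in ((i:ℝ)*δ)..(((i:ℝ)+1)*δ),
          (deriv κ (x ((i:ℝ)*δ)) - deriv κ (x s)) * f (x ((i:ℝ)*δ)) *
            Real.exp (∫ u in s..t, (deriv f (x u) + deriv κ (x u)))|
        ≤ c2 * δ * ∫ s in ((i:ℝ)*δ)..(((i:ℝ)+1)*δ),
            Real.exp (∫ u in s..t, (deriv f (x u) + deriv κ (x u))) := by
    intro i hi
    have hxcI : ContinuousOn x (uIcc ((i:ℝ)*δ) (((i:ℝ)+1)*δ)) :=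
      (hxcont t ht).mono (hsubset i hi)
    have hEcI : ContinuousOn
        (fun s => Real.exp (∫ u in s..t, (deriv f (x u) + deriv κ (x u))))
        (uIcc ((i:ℝ)*δ) (((i:ℝ)+1)*δ)) := hEc.mono (hsubset i hi)
    have hκcI : ContinuousOn (fun s => deriv κ (x s)) (uIcc ((i:ℝ)*δ) (((i:ℝ)+1)*δ)) :=
      hκd2.continuous.comp_continuousOn hxcI
    have hG2c : ContinuousOn
        (fun s => (deriv κ (x ((i:ℝ)*δ)) - deriv κ (x s)) * f (x ((i:ℝ)*δ)) *
          Real.exp (∫ u in s..t, (deriv f (x u) + deriv κ (x u))))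
        (uIcc ((i:ℝ)*δ) (((i:ℝ)+1)*δ)) :=
      (((continuousOn_const (c := deriv κ (x ((i:ℝ)*δ)))).sub hκcI).mul
        (continuousOn_const (c := f (x ((i:ℝ)*δ))))).mul hEcI
    have hbigc : ContinuousOn
        (fun s => c2 * δ * Real.exp (∫ u in s..t, (deriv f (x u) + deriv κ (x u))))
        (uIcc ((i:ℝ)*δ) (((i:ℝ)+1)*δ)) :=
      (continuousOn_const (c := c2 * δ)).mul hEcI
    calc |∫ s in ((i:ℝ)*δ)..(((i:ℝ)+1)*δ),
          (deriv κ (x ((i:ℝ)*δ)) - deriv κ (x s)) * f (x ((i:ℝ)*δ)) *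
            Real.exp (∫ u in s..t, (deriv f (x u) + deriv κ (x u)))|
        ≤ ∫ s in ((i:ℝ)*δ)..(((i:ℝ)+1)*δ),
          |(deriv κ (x ((i:ℝ)*δ)) - deriv κ (x s)) * f (x ((i:ℝ)*δ)) *
            Real.exp (∫ u in s..t, (deriv f (x u) + deriv κ (x u)))| :=
          intervalIntegral.abs_integral_le_integral_abs (hiab i)
      _ ≤ ∫ s in ((i:ℝ)*δ)..(((i:ℝ)+1)*δ),
          c2 * δ * Real.exp (∫ u in s..t, (deriv f (x u) + deriv κ (x u))) := by
          refine intervalIntegral.integral_mono_on (hiab i)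
            hG2c.abs.intervalIntegrable hbigc.intervalIntegrable ?_
          intro s hs
          have hs0 : 0 ≤ s := le_trans (hia0 i) hs.1
          have hxa : |x ((i:ℝ)*δ)| ≤ R := hxbd _ (hia0 i)
          have hdk : |deriv κ (x ((i:ℝ)*δ)) - deriv κ (x s)| ≤ K * (M * δ) := by
            calc |deriv κ (x ((i:ℝ)*δ)) - deriv κ (x s)|
                ≤ K * |x ((i:ℝ)*δ) - x s| := hκ'lip _ _
              _ ≤ K * (M * δ) := by
                  refine mul_le_mul_of_nonneg_left ?_ hK0
                  rw [abs_sub_comm]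
                  exact hxstep i hi s hs
          have hfa : |f (x ((i:ℝ)*δ))| ≤ Bf := hfy _ hxa
          have hE0 : (0:ℝ) ≤ Real.exp (∫ u in s..t, (deriv f (x u) + deriv κ (x u))) :=
            (Real.exp_pos _).le
          have habs : |(deriv κ (x ((i:ℝ)*δ)) - deriv κ (x s)) * f (x ((i:ℝ)*δ)) *
              Real.exp (∫ u in s..t, (deriv f (x u) + deriv κ (x u)))|
              = |deriv κ (x ((i:ℝ)*δ)) - deriv κ (x s)| * |f (x ((i:ℝ)*δ))| *
              Real.exp (∫ u in s..t, (deriv f (x u) + deriv κ (x u))) := by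
            rw [abs_mul, abs_mul, abs_of_nonneg hE0]
          rw [habs]
          have hmm : |deriv κ (x ((i:ℝ)*δ)) - deriv κ (x s)| * |f (x ((i:ℝ)*δ))|
              ≤ (K * (M * δ)) * Bf :=
            mul_le_mul hdk hfa (abs_nonneg _) (by positivity)
          have := mul_le_mul_of_nonneg_right hmm hE0
          have heq : (K * (M * δ)) * Bf = c2 * δ := by rw [hc2def]; ring
          rw [heq] at this
          exact this
      _ = c2 * δ * ∫ s in ((i:ℝ)*δ)..(((i:ℝ)+1)*δ),
            Real.exp (∫ u in s..t, (deriv f (x u) + deriv κ (x u))) :=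
          intervalIntegral.integral_const_mul _ _
  have hterm3 : ∀ i : ℕ, i < N →
      |∫ s in ((i:ℝ)*δ)..(((i:ℝ)+1)*δ),
          deriv κ (x s) * (f (x ((i:ℝ)*δ)) - f (x s)) *
            Real.exp (∫ u in s..t, (deriv f (x u) + deriv κ (x u)))|
        ≤ c3 * δ * ∫ s in ((i:ℝ)*δ)..(((i:ℝ)+1)*δ),
            Real.exp (∫ u in s..t, (deriv f (x u) + deriv κ (x u))) := by
    intro i hi
    have hxcI : ContinuousOn x (uIcc ((i:ℝ)*δ) (((i:ℝ)+1)*δ)) :=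
      (hxcont t ht).mono (hsubset i hi)
    have hEcI : ContinuousOn
        (fun s => Real.exp (∫ u in s..t, (deriv f (x u) + deriv κ (x u))))
        (uIcc ((i:ℝ)*δ) (((i:ℝ)+1)*δ)) := hEc.mono (hsubset i hi)
    have hκcI : ContinuousOn (fun s => deriv κ (x s)) (uIcc ((i:ℝ)*δ) (((i:ℝ)+1)*δ)) :=
      hκd2.continuous.comp_continuousOn hxcI
    have hfcI : ContinuousOn (fun s => f (x s)) (uIcc ((i:ℝ)*δ) (((i:ℝ)+1)*δ)) :=
      hfd.continuous.comp_continuousOn hxcI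
    have hG3c : ContinuousOn
        (fun s => deriv κ (x s) * (f (x ((i:ℝ)*δ)) - f (x s)) *
          Real.exp (∫ u in s..t, (deriv f (x u) + deriv κ (x u))))
        (uIcc ((i:ℝ)*δ) (((i:ℝ)+1)*δ)) :=
      (hκcI.mul ((continuousOn_const (c := f (x ((i:ℝ)*δ)))).sub hfcI)).mul hEcI
    have hbigc : ContinuousOn
        (fun s => c3 * δ * Real.exp (∫ u in s..t, (deriv f (x u) + deriv κ (x u))))
        (uIcc ((i:ℝ)*δ) (((i:ℝ)+1)*δ)) :=
      (continuousOn_const (c := c3 * δ)).mul hEcI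
    calc |∫ s in ((i:ℝ)*δ)..(((i:ℝ)+1)*δ),
          deriv κ (x s) * (f (x ((i:ℝ)*δ)) - f (x s)) *
            Real.exp (∫ u in s..t, (deriv f (x u) + deriv κ (x u)))|
        ≤ ∫ s in ((i:ℝ)*δ)..(((i:ℝ)+1)*δ),
          |deriv κ (x s) * (f (x ((i:ℝ)*δ)) - f (x s)) *
            Real.exp (∫ u in s..t, (deriv f (x u) + deriv κ (x u)))| :=
          intervalIntegral.abs_integral_le_integral_abs (hiab i)
      _ ≤ ∫ s in ((i:ℝ)*δ)..(((i:ℝ)+1)*δ),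
          c3 * δ * Real.exp (∫ u in s..t, (deriv f (x u) + deriv κ (x u))) := by
          refine intervalIntegral.integral_mono_on (hiab i)
            hG3c.abs.intervalIntegrable hbigc.intervalIntegrable ?_
          intro s hs
          have hs0 : 0 ≤ s := le_trans (hia0 i) hs.1
          have hxa : |x ((i:ℝ)*δ)| ≤ R := hxbd _ (hia0 i)
          have hxs : |x s| ≤ R := hxbd s hs0
          have hdk : |deriv κ (x s)| ≤ Lκ := hκ'bd _
          have hdf : |f (x ((i:ℝ)*δ)) - f (x s)| ≤ (ξ * (R ^ q + R ^ q) + μ) * (M * δ) := by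
            have h1 := hfLip (x ((i:ℝ)*δ)) (x s)
            have hcoef : 0 ≤ ξ * (R ^ q + R ^ q) + μ := by
              have : 0 ≤ ξ * (R ^ q + R ^ q) := mul_nonneg hξ.le (by linarith)
              linarith [hμ.le]
            have h2 : (ξ * (|x ((i:ℝ)*δ)| ^ q + |x s| ^ q) + μ) * |x ((i:ℝ)*δ) - x s|
                ≤ (ξ * (R ^ q + R ^ q) + μ) * (M * δ) := by
              have hq1 : |x ((i:ℝ)*δ)| ^ q ≤ R ^ q := pow_le_pow_left₀ (abs_nonneg _) hxa q
              have hq2 : |x s| ^ q ≤ R ^ q := pow_le_pow_left₀ (abs_nonneg _) hxs q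
              have hxd : |x ((i:ℝ)*δ) - x s| ≤ M * δ := by
                rw [abs_sub_comm]
                exact hxstep i hi s hs
              have hstep1 : (ξ * (|x ((i:ℝ)*δ)| ^ q + |x s| ^ q) + μ)
                  ≤ (ξ * (R ^ q + R ^ q) + μ) := by
                have := mul_le_mul_of_nonneg_left (add_le_add hq1 hq2) hξ.le
                linarith
              exact mul_le_mul hstep1 hxd (abs_nonneg _) hcoef
            exact le_trans h1 h2
          have hE0 : (0:ℝ) ≤ Real.exp (∫ u in s..t, (deriv f (x u) + deriv κ (x u))) :=
            (Real.exp_pos _).le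
          have habs : |deriv κ (x s) * (f (x ((i:ℝ)*δ)) - f (x s)) *
              Real.exp (∫ u in s..t, (deriv f (x u) + deriv κ (x u)))|
              = |deriv κ (x s)| * |f (x ((i:ℝ)*δ)) - f (x s)| *
              Real.exp (∫ u in s..t, (deriv f (x u) + deriv κ (x u))) := by
            rw [abs_mul, abs_mul, abs_of_nonneg hE0]
          rw [habs]
          have hmm : |deriv κ (x s)| * |f (x ((i:ℝ)*δ)) - f (x s)|
              ≤ Lκ * ((ξ * (R ^ q + R ^ q) + μ) * (M * δ)) :=
            mul_le_mul hdk hdf (abs_nonneg _) hLκ.le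
          have := mul_le_mul_of_nonneg_right hmm hE0
          have heq : Lκ * ((ξ * (R ^ q + R ^ q) + μ) * (M * δ)) = c3 * δ := by
            rw [hc3def]; ring
          rw [heq] at this
          exact this
      _ = c3 * δ * ∫ s in ((i:ℝ)*δ)..(((i:ℝ)+1)*δ),
            Real.exp (∫ u in s..t, (deriv f (x u) + deriv κ (x u))) :=
          intervalIntegral.integral_const_mul _ _
  -- assemble
  have hS2 : |∑ i ∈ Finset.range N,
      ∫ s in ((i:ℝ)*δ)..(((i:ℝ)+1)*δ),
        (deriv κ (x ((i:ℝ)*δ)) - deriv κ (x s)) * f (x ((i:ℝ)*δ)) *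
          Real.exp (∫ u in s..t, (deriv f (x u) + deriv κ (x u)))| ≤ c2 * Cstar * δ := by
    calc |∑ i ∈ Finset.range N,
        ∫ s in ((i:ℝ)*δ)..(((i:ℝ)+1)*δ),
          (deriv κ (x ((i:ℝ)*δ)) - deriv κ (x s)) * f (x ((i:ℝ)*δ)) *
            Real.exp (∫ u in s..t, (deriv f (x u) + deriv κ (x u)))|
        ≤ ∑ i ∈ Finset.range N,
          |∫ s in ((i:ℝ)*δ)..(((i:ℝ)+1)*δ),
            (deriv κ (x ((i:ℝ)*δ)) - deriv κ (x s)) * f (x ((i:ℝ)*δ)) *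
              Real.exp (∫ u in s..t, (deriv f (x u) + deriv κ (x u)))| :=
          Finset.abs_sum_le_sum_abs _ _
      _ ≤ ∑ i ∈ Finset.range N,
          c2 * δ * ∫ s in ((i:ℝ)*δ)..(((i:ℝ)+1)*δ),
            Real.exp (∫ u in s..t, (deriv f (x u) + deriv κ (x u))) :=
          Finset.sum_le_sum (fun i hi => hterm2 i (Finset.mem_range.1 hi))
      _ = c2 * δ * ∑ i ∈ Finset.range N,
          ∫ s in ((i:ℝ)*δ)..(((i:ℝ)+1)*δ),
            Real.exp (∫ u in s..t, (deriv f (x u) + deriv κ (x u))) := by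
          rw [Finset.mul_sum]
      _ ≤ c2 * δ * Cstar :=
          mul_le_mul_of_nonneg_left hEsum (mul_nonneg hc20 hδ0.le)
      _ = c2 * Cstar * δ := by ring
  have hS3 : |∑ i ∈ Finset.range N,
      ∫ s in ((i:ℝ)*δ)..(((i:ℝ)+1)*δ),
        deriv κ (x s) * (f (x ((i:ℝ)*δ)) - f (x s)) *
          Real.exp (∫ u in s..t, (deriv f (x u) + deriv κ (x u)))| ≤ c3 * Cstar * δ := by
    calc |∑ i ∈ Finset.range N,
        ∫ s in ((i:ℝ)*δ)..(((i:ℝ)+1)*δ),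
          deriv κ (x s) * (f (x ((i:ℝ)*δ)) - f (x s)) *
            Real.exp (∫ u in s..t, (deriv f (x u) + deriv κ (x u)))|
        ≤ ∑ i ∈ Finset.range N,
          |∫ s in ((i:ℝ)*δ)..(((i:ℝ)+1)*δ),
            deriv κ (x s) * (f (x ((i:ℝ)*δ)) - f (x s)) *
              Real.exp (∫ u in s..t, (deriv f (x u) + deriv κ (x u)))| :=
          Finset.abs_sum_le_sum_abs _ _
      _ ≤ ∑ i ∈ Finset.range N,
          c3 * δ * ∫ s in ((i:ℝ)*δ)..(((i:ℝ)+1)*δ),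
            Real.exp (∫ u in s..t, (deriv f (x u) + deriv κ (x u))) :=
          Finset.sum_le_sum (fun i hi => hterm3 i (Finset.mem_range.1 hi))
      _ = c3 * δ * ∑ i ∈ Finset.range N,
          ∫ s in ((i:ℝ)*δ)..(((i:ℝ)+1)*δ),
            Real.exp (∫ u in s..t, (deriv f (x u) + deriv κ (x u))) := by
          rw [Finset.mul_sum]
      _ ≤ c3 * δ * Cstar :=
          mul_le_mul_of_nonneg_left hEsum (mul_nonneg hc30 hδ0.le)
      _ = c3 * Cstar * δ := by ring
  have hD2 : c2 * Cstar * δ ≤ D * δ := by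
    refine mul_le_mul_of_nonneg_right ?_ hδ0.le
    rw [hDdef]
    have := le_max_left (c2 * Cstar) (c3 * Cstar)
    linarith
  have hD3 : c3 * Cstar * δ ≤ D * δ := by
    refine mul_le_mul_of_nonneg_right ?_ hδ0.le
    rw [hDdef]
    have := le_max_right (c2 * Cstar) (c3 * Cstar)
    linarith
  have hp2 : |∑ i ∈ Finset.range N,
      ∫ s in ((i:ℝ)*δ)..(((i:ℝ)+1)*δ),
        (deriv κ (x ((i:ℝ)*δ)) - deriv κ (x s)) * f (x ((i:ℝ)*δ)) *
          Real.exp (∫ u in s..t, (deriv f (x u) + deriv κ (x u)))| ^ p ≤ D ^ p * δ ^ p := by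
    rw [← mul_pow]
    exact pow_le_pow_left₀ (abs_nonneg _) (le_trans hS2 hD2) p
  have hp3 : |∑ i ∈ Finset.range N,
      ∫ s in ((i:ℝ)*δ)..(((i:ℝ)+1)*δ),
        deriv κ (x s) * (f (x ((i:ℝ)*δ)) - f (x s)) *
          Real.exp (∫ u in s..t, (deriv f (x u) + deriv κ (x u)))| ^ p ≤ D ^ p * δ ^ p := by
    rw [← mul_pow]
    exact pow_le_pow_left₀ (abs_nonneg _) (le_trans hS3 hD3) p
  have hfin : 2 * D ^ p * δ ^ p = D ^ p * δ ^ p + D ^ p * δ ^ p := by ring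
  rw [hfin]
  exact add_le_add hp2 hp3



/-- The sampling map `π_δ(t) = δ·⌊t/δ⌋`. -/
noncomputable def piD (δ t : ℝ) : ℝ := δ * (⌊t / δ⌋ : ℤ)

/-- Uniform-in-time bound `|𝓡₂^δ(t)|^p + |𝓡₃^δ(t)|^p ≤ C·δ^p` for the
Riemann-sum remainders of the sampled drift term, with
`E(s,t) = exp(∫ₛᵗ (f'(x(u)) + κ'(x(u))) du)`. -/
theorem stmt7
    (f κ : ℝ → ℝ) (x₀ : ℝ) (x : ℝ → ℝ)
    -- Assumption (A1)
    (lam ξ μ Lκ γ : ℝ) (q : ℕ)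
    (hlam : 0 < lam) (hξ : 0 < ξ) (hμ : 0 < μ) (hLκ : 0 < Lκ) (hγ : 0 < γ)
    (hcontr : ∀ a b : ℝ, (a - b) * (f a - f b) ≤ -lam * (a - b) ^ 2)
    (hfLip : ∀ a b : ℝ, |f a - f b| ≤ (ξ * (|a| ^ q + |b| ^ q) + μ) * |a - b|)
    (hκLip : ∀ a b : ℝ, |κ a - κ b| ≤ Lκ * |a - b|)
    (hgap : lam / 2 - Lκ > 0)
    (hκbd : ∀ a : ℝ, |κ a| ≤ γ)
    -- Assumption (A3)
    (hfd : Differentiable ℝ f) (hfd2 : Differentiable ℝ (deriv f))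
    (hκd : Differentiable ℝ κ) (hκd2 : Differentiable ℝ (deriv κ))
    (K : ℝ) (hK : ∀ y : ℝ, |deriv (deriv κ) y| ≤ K)
    (cf : ℝ) (rf : ℕ) (hf2 : ∀ y : ℝ, |deriv (deriv f) y| ≤ cf * (1 + |y| ^ rf))
    (Cstar : ℝ) (hCstar : 0 < Cstar)
    (hint : ∀ m : ℕ, (m = 1 ∨ m = 2) → ∀ t : ℝ, 0 ≤ t →
      (∫ s in (0:ℝ)..t,
        Real.exp ((m : ℝ) * ∫ u in s..t, (deriv f (x u) + deriv κ (x u)))) ≤ Cstar)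
    -- the closed-loop ODE `dx/dt = f(x) + κ(x)`, `x(0) = x₀`
    (hx : ∀ t : ℝ, 0 ≤ t → x t = x₀ + ∫ s in (0:ℝ)..t, (f (x s) + κ (x s)))
    :
    ∀ p : ℕ, 1 ≤ p → ∃ C : ℝ, 0 < C ∧ ∀ δ : ℝ, 0 < δ → δ < 1 → ∀ t : ℝ, 0 ≤ t →
      |∑ i ∈ Finset.range (⌊t / δ⌋).toNat,
          ∫ s in ((i : ℝ) * δ)..(((i : ℝ) + 1) * δ),
            (deriv κ (x ((i : ℝ) * δ)) - deriv κ (x s)) * f (x ((i : ℝ) * δ)) *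
              Real.exp (∫ u in s..t, (deriv f (x u) + deriv κ (x u)))| ^ p
        +
      |∑ i ∈ Finset.range (⌊t / δ⌋).toNat,
          ∫ s in ((i : ℝ) * δ)..(((i : ℝ) + 1) * δ),
            deriv κ (x s) * (f (x ((i : ℝ) * δ)) - f (x s)) *
              Real.exp (∫ u in s..t, (deriv f (x u) + deriv κ (x u)))| ^ p
        ≤ C * δ ^ p := by
  exact stmt7_aux f κ x₀ x lam ξ μ Lκ γ q hlam hξ hμ hLκ hγ hcontr hfLip hκLip hgap hκbd
    hfd hfd2 hκd hκd2 K hK cf rf hf2 Cstar hCstar hint hx
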